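/- Let G = G₁ *_F G₂ be a free product with amalgamation where F has index 2 in both G₁ and G₂. Choose t₁ ∈ G₁ \ F and t₂ ∈ G₂ \ F and set t = t₁t₂. Then the kernel of the natural epimorphism G → D_∞ (induced by G₁ → ℤ/2, G₂ → ℤ/2 with kernels F) composed with D_∞ → ℤ/2 is the subgroup generated by F and t, it has index 2 in G, and it is isomorphic to F ⋊_α ℤ where α is conjugation by t⁻¹. -/

import Mathlib

open Monoid

lemma exists_conj_mulAut {F G : Type} [Group F] [Group G] (φ : F →* G)
    (hφ : Function.Injective φ) (hidx : φ.range.index = 2) (t : G) :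
    ∃ β : MulAut F, ∀ x, φ (β x) = t⁻¹ * φ x * t := by
  have hmem : ∀ (u : G) (x : F), u⁻¹ * φ x * u ∈ φ.range := by
    intro u x
    have h1 : φ x ∈ φ.range := ⟨x, rfl⟩
    rw [mul_assoc, Subgroup.mul_mem_iff_of_index_two hidx,
      Subgroup.mul_mem_iff_of_index_two hidx, Subgroup.inv_mem_iff]
    tauto
  choose b hb using fun x => hmem t x
  choose b' hb' using fun x => hmem t⁻¹ x
  have hb'b : ∀ x, b' (b x) = x := by
    intro x; apply hφ; rw [hb', hb]; group
  have hbb' : ∀ x, b (b' x) = x := by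
    intro x; apply hφ; rw [hb, hb']; group
  refine ⟨⟨⟨b, b', hb'b, hbb'⟩, ?_⟩, hb⟩
  intro x y
  apply hφ
  simp only [Equiv.coe_fn_mk, map_mul, hb]
  group

open scoped Classical in
/-- Let `G = G₁ *_F G₂` be an (injective) amalgamated free product in which `F` has
index 2 in both `G₁` and `G₂` (realized as the pushout `PushoutI φ` of the two
inclusions `φ i : F →* G i`, indexed by `i : Bool`).  Choose `t₁ ∈ G₁ \ F`,
`t₂ ∈ G₂ \ F` and set `t = t₁t₂`.  Let `p : G → D_∞` be the natural epimorphism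
(sending `Gᵢ → ℤ/2 ⊂ D_∞` with kernel `F`), and `π : D_∞ → ℤ/2` the epimorphism
with infinite cyclic kernel.  Then `ker (π ∘ p)` is the subgroup generated by `F`
and `t`, it has index 2 in `G`, and it is isomorphic to `F ⋊_α ℤ` where `α` is
conjugation by `t⁻¹` (equivalently, `t x t⁻¹ = α(x)` for `x ∈ F`). -/
theorem stmt11
    (F : Type) [Group F] (G : Bool → Type) [∀ i, Group (G i)]
    (φ : ∀ i, F →* G i) (hφ : ∀ i, Function.Injective (φ i))
    (hindex : ∀ i, (φ i).range.index = 2)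
    (t₁ : G false) (t₂ : G true)
    (ht₁ : t₁ ∉ (φ false).range) (ht₂ : t₂ ∉ (φ true).range)
    (p : PushoutI φ →* DihedralGroup 0)
    (hp : ∀ (i : Bool) (x : G i),
      p (PushoutI.of (φ := φ) i x) =
        if x ∈ (φ i).range then 1 else DihedralGroup.sr (if i then 1 else 0))
    (π : DihedralGroup 0 →* Multiplicative (ZMod 2))
    (hπr : ∀ a : ZMod 0, π (DihedralGroup.r a) = 1)
    (hπs : ∀ a : ZMod 0, π (DihedralGroup.sr a) = Multiplicative.ofAdd (1 : ZMod 2)) :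
    (π.comp p).ker =
      Subgroup.closure
        (Set.range (PushoutI.base φ) ∪
          {PushoutI.of (φ := φ) false t₁ * PushoutI.of (φ := φ) true t₂}) ∧
    (π.comp p).ker.index = 2 ∧
    ∃ α : MulAut F,
      (∀ x : F,
        PushoutI.base φ (α x) =
          (PushoutI.of (φ := φ) false t₁ * PushoutI.of (φ := φ) true t₂)⁻¹ *
            PushoutI.base φ x *
            (PushoutI.of (φ := φ) false t₁ * PushoutI.of (φ := φ) true t₂)) ∧
      Nonempty ((π.comp p).ker ≃*
        F ⋊[zpowersHom (MulAut F) α] Multiplicative ℤ) := by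
  -- notation
  set s : PushoutI φ := PushoutI.of (φ := φ) false t₁ with hs
  set u : PushoutI φ := PushoutI.of (φ := φ) true t₂ with hu
  set t : PushoutI φ := s * u with ht
  -- conjugation automorphisms
  obtain ⟨β₁, hβ₁⟩ := exists_conj_mulAut (φ false) (hφ false) (hindex false) t₁
  obtain ⟨β₂, hβ₂⟩ := exists_conj_mulAut (φ true) (hφ true) (hindex true) t₂
  set α : MulAut F := β₁.trans β₂ with hα'
  have hbase : ∀ (i : Bool) (x : F), PushoutI.of (φ := φ) i (φ i x) = PushoutI.base φ x :=
    fun i x => PushoutI.of_apply_eq_base φ i x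
  have hconj_of : ∀ (i : Bool) (g : G i) (x : F),
      (PushoutI.of (φ := φ) i g)⁻¹ * PushoutI.base φ x * PushoutI.of (φ := φ) i g
        = PushoutI.of (φ := φ) i (g⁻¹ * φ i x * g) := by
    intro i g x
    rw [← hbase i x]
    simp [map_mul]
  have hα : ∀ x : F, PushoutI.base φ (α x) = t⁻¹ * PushoutI.base φ x * t := by
    intro x
    have h1 : PushoutI.base φ (β₁ x) = s⁻¹ * PushoutI.base φ x * s := by
      rw [hconj_of false t₁ x, ← hβ₁, hbase]
    have h2 : PushoutI.base φ (β₂ (β₁ x)) = u⁻¹ * PushoutI.base φ (β₁ x) * u := by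
      rw [hconj_of true t₂ (β₁ x), ← hβ₂, hbase]
    have : α x = β₂ (β₁ x) := rfl
    rw [this, h2, h1, ht]
    group
  have hαinv : ∀ x : F, PushoutI.base φ (α⁻¹ x) = t * PushoutI.base φ x * t⁻¹ := by
    intro x
    have := hα (α⁻¹ x)
    rw [show α (α⁻¹ x) = x by simp] at this
    rw [this]; group
  have hαz : ∀ (m : ℤ) (x : F),
      PushoutI.base φ ((α ^ m) x) = t⁻¹ ^ m * PushoutI.base φ x * t ^ m := by
    intro m
    induction m using Int.induction_on with
    | zero => intro x; simp
    | succ k ih =>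
      intro x
      have h1 : (α ^ ((k : ℤ) + 1)) x = (α ^ (k : ℤ)) (α x) := by
        rw [zpow_add_one]; rfl
      rw [h1, ih, hα]
      group
    | pred k ih =>
      intro x
      have h1 : (α ^ (-(k : ℤ) - 1)) x = (α ^ (-(k : ℤ))) (α⁻¹ x) := by
        rw [zpow_sub_one]; rfl
      rw [h1, ih, hαinv]
      group
  -- the homomorphism from the semidirect product
  set f : (F ⋊[zpowersHom (MulAut F) α] Multiplicative ℤ) →* PushoutI φ :=
    SemidirectProduct.lift (PushoutI.base φ) (zpowersHom _ t⁻¹) (by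
      intro g
      ext x
      simp only [MonoidHom.comp_apply, MulEquiv.coe_toMonoidHom, MulAut.conj_apply,
        zpowersHom_apply]
      rw [hαz]
      group) with hf
  have hf_apply : ∀ g, f g = PushoutI.base φ g.left * t⁻¹ ^ (Multiplicative.toAdd g.right) := by
    intro g
    conv_lhs => rw [← SemidirectProduct.inl_left_mul_inr_right g]
    rw [map_mul, hf, SemidirectProduct.lift_inl, SemidirectProduct.lift_inr, zpowersHom_apply]
  -- basic membership facts in `f.range`
  have hbase_mem : ∀ y : F, PushoutI.base φ y ∈ f.range := by
    intro y
    exact ⟨SemidirectProduct.inl y, by rw [hf_apply]; simp⟩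
  have ht_mem : t ∈ f.range := by
    refine ⟨SemidirectProduct.inr (Multiplicative.ofAdd (-1 : ℤ)), ?_⟩
    rw [hf_apply]
    simp
  have hnormal : ∀ (i : Bool) (g : G i) (y : F), g⁻¹ * φ i y * g ∈ (φ i).range := by
    intro i g y
    have h1 : φ i y ∈ (φ i).range := ⟨y, rfl⟩
    rw [mul_assoc, Subgroup.mul_mem_iff_of_index_two (hindex i),
      Subgroup.mul_mem_iff_of_index_two (hindex i), Subgroup.inv_mem_iff]
    tauto
  obtain ⟨y₁, hy₁⟩ : t₁ * t₁ ∈ (φ false).range :=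
    (Subgroup.mul_mem_iff_of_index_two (hindex false)).2 (by tauto)
  obtain ⟨y₂, hy₂⟩ : t₂ * t₂ ∈ (φ true).range :=
    (Subgroup.mul_mem_iff_of_index_two (hindex true)).2 (by tauto)
  have hs2 : s * s = PushoutI.base φ y₁ := by rw [← hbase false y₁, hy₁, map_mul]
  have hu2 : u * u = PushoutI.base φ y₂ := by rw [← hbase true y₂, hy₂, map_mul]
  have hs2_mem : s * s ∈ f.range := hs2 ▸ hbase_mem y₁
  have hu2_mem : u * u ∈ f.range := hu2 ▸ hbase_mem y₂
  -- `f.range` is the closure of the base and `t`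
  have hMclosure : f.range = Subgroup.closure (Set.range (PushoutI.base φ) ∪ {t}) := by
    apply le_antisymm
    · rintro _ ⟨g, rfl⟩
      rw [hf_apply]
      have h1 : PushoutI.base φ g.left ∈
          Subgroup.closure (Set.range (PushoutI.base φ) ∪ {t}) :=
        Subgroup.subset_closure (Or.inl ⟨g.left, rfl⟩)
      have h2 : t ∈ Subgroup.closure (Set.range (PushoutI.base φ) ∪ {t}) :=
        Subgroup.subset_closure (Or.inr rfl)
      exact mul_mem h1 (zpow_mem (inv_mem h2) _)
    · rw [Subgroup.closure_le]
      rintro x (⟨y, rfl⟩ | rfl)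
      · exact hbase_mem y
      · exact ht_mem
  -- conjugation stability of `f.range`
  have hconj_stab : ∀ v : PushoutI φ,
      (∀ y : F, v * PushoutI.base φ y * v⁻¹ ∈ Set.range (PushoutI.base φ)) →
      v * t * v⁻¹ ∈ f.range → ∀ w ∈ f.range, v * w * v⁻¹ ∈ f.range := by
    intro v hvb hvt
    have key : Subgroup.map (MulAut.conj v).toMonoidHom f.range ≤ f.range := by
      conv_lhs => rw [hMclosure]
      rw [MonoidHom.map_closure, Subgroup.closure_le]
      rintro w hw
      simp only [Set.mem_image] at hw
      obtain ⟨x, hx, rfl⟩ := hw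
      simp only [MulEquiv.coe_toMonoidHom, MulAut.conj_apply, SetLike.mem_coe]
      rcases hx with ⟨y, rfl⟩ | rfl
      · obtain ⟨z, hz⟩ := hvb y
        rw [← hz]
        exact hbase_mem z
      · exact hvt
    intro w hw
    simpa using key ⟨w, hw, rfl⟩
  have hsb : ∀ y : F, s * PushoutI.base φ y * s⁻¹ ∈ Set.range (PushoutI.base φ) := by
    intro y
    obtain ⟨z, hz⟩ := hnormal false t₁⁻¹ y
    rw [inv_inv] at hz
    have h2 := hconj_of false t₁⁻¹ y
    rw [inv_inv, ← hz, hbase, map_inv, inv_inv] at h2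
    exact ⟨z, by rw [hs]; exact h2.symm⟩
  have hsb' : ∀ y : F, s⁻¹ * PushoutI.base φ y * s⁻¹⁻¹ ∈ Set.range (PushoutI.base φ) := by
    intro y
    obtain ⟨z, hz⟩ := hnormal false t₁ y
    have h2 := hconj_of false t₁ y
    rw [← hz, hbase] at h2
    exact ⟨z, by rw [inv_inv, hs]; exact h2.symm⟩
  have hst : s * t * s⁻¹ ∈ f.range := by
    have heq : s * t * s⁻¹ = (s * s) * ((u * u) * t⁻¹) := by rw [ht]; group
    rw [heq]
    exact mul_mem hs2_mem (mul_mem hu2_mem (inv_mem ht_mem))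
  have hst' : s⁻¹ * t * s⁻¹⁻¹ ∈ f.range := by
    have heq : s⁻¹ * t * s⁻¹⁻¹ = ((u * u) * t⁻¹) * (s * s) := by rw [ht]; group
    rw [heq]
    exact mul_mem (mul_mem hu2_mem (inv_mem ht_mem)) hs2_mem
  have hconj₁ : ∀ w ∈ f.range, s * w * s⁻¹ ∈ f.range := hconj_stab s hsb hst
  have hconj₂ : ∀ w ∈ f.range, s⁻¹ * w * s ∈ f.range := by
    intro w hw
    have := hconj_stab s⁻¹ hsb' hst' w hw
    rwa [inv_inv] at this
  -- every element is in `f.range` or `f.range * s`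
  have hcover : ∀ g : PushoutI φ, g ∈ f.range ∨ g * s⁻¹ ∈ f.range := by
    intro g
    induction g using PushoutI.induction_on with
    | of i x =>
      cases i with
      | false =>
        by_cases hx : x ∈ (φ false).range
        · left
          obtain ⟨y, rfl⟩ := hx
          rw [hbase]
          exact hbase_mem y
        · right
          obtain ⟨y, hy⟩ : x * t₁⁻¹ ∈ (φ false).range := by
            rw [Subgroup.mul_mem_iff_of_index_two (hindex false), Subgroup.inv_mem_iff]
            tauto
          have heq : PushoutI.of (φ := φ) false x * s⁻¹ = PushoutI.base φ y := by
            rw [← hbase false y, hy, map_mul, map_inv, hs]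
          rw [heq]
          exact hbase_mem y
      | true =>
        by_cases hx : x ∈ (φ true).range
        · left
          obtain ⟨y, rfl⟩ := hx
          rw [hbase]
          exact hbase_mem y
        · right
          obtain ⟨y, hy⟩ : t₂⁻¹ * x ∈ (φ true).range := by
            rw [Subgroup.mul_mem_iff_of_index_two (hindex true), Subgroup.inv_mem_iff]
            tauto
          have hxe : PushoutI.of (φ := φ) true x = u * PushoutI.base φ y := by
            rw [← hbase true y, hy, map_mul, map_inv, hu]
            group
          have heq : PushoutI.of (φ := φ) true x * s⁻¹ =
              ((u * u) * t⁻¹) * (s * PushoutI.base φ y * s⁻¹) := by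
            rw [hxe, ht]
            group
          rw [heq]
          exact mul_mem (mul_mem hu2_mem (inv_mem ht_mem)) (hconj₁ _ (hbase_mem y))
    | base h => exact Or.inl (hbase_mem h)
    | mul x y ihx ihy =>
      rcases ihx with hx | hx <;> rcases ihy with hy | hy
      · exact Or.inl (mul_mem hx hy)
      · refine Or.inr ?_
        have heq : x * y * s⁻¹ = x * (y * s⁻¹) := by group
        rw [heq]
        exact mul_mem hx hy
      · refine Or.inr ?_
        have heq : x * y * s⁻¹ = (x * s⁻¹) * (s * y * s⁻¹) := by group
        rw [heq]
        exact mul_mem hx (hconj₁ y hy)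
      · refine Or.inl ?_
        have heq : x * y = (x * s⁻¹) * (s * (y * s⁻¹) * s⁻¹) * (s * s) := by group
        rw [heq]
        exact mul_mem (mul_mem hx (hconj₁ _ hy)) hs2_mem
  -- computations of `π ∘ p`
  have hp_base : ∀ y : F, p (PushoutI.base φ y) = 1 := by
    intro y
    rw [← hbase false y, hp, if_pos ⟨y, rfl⟩]
  have hπps : (π.comp p) s = Multiplicative.ofAdd (1 : ZMod 2) := by
    rw [MonoidHom.comp_apply, hs, hp, if_neg ht₁]
    simpa using hπs 0
  have hπpu : (π.comp p) u = Multiplicative.ofAdd (1 : ZMod 2) := by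
    rw [MonoidHom.comp_apply, hu, hp, if_neg ht₂]
    simpa using hπs 1
  have hπpt : (π.comp p) t = 1 := by
    rw [ht, map_mul, hπps, hπpu]
    decide
  have hMker : f.range ≤ (π.comp p).ker := by
    rw [hMclosure, Subgroup.closure_le]
    rintro x (⟨y, rfl⟩ | rfl)
    · simp [MonoidHom.mem_ker, hp_base]
    · simp [MonoidHom.mem_ker]
      exact hπpt
  have hker : (π.comp p).ker = f.range := by
    refine le_antisymm ?_ hMker
    intro g hg
    rcases hcover g with h | h
    · exact h
    · exfalso
      have h1 : (π.comp p) (g * s⁻¹) = 1 := hMker h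
      rw [MonoidHom.mem_ker] at hg
      rw [map_mul, hg, one_mul, map_inv, hπps] at h1
      exact absurd h1 (by decide)
  -- the index is 2
  have hsurj : Function.Surjective (π.comp p) := by
    intro z
    rcases (by decide : ∀ z : Multiplicative (ZMod 2),
        z = 1 ∨ z = Multiplicative.ofAdd 1) z with rfl | rfl
    · exact ⟨1, map_one _⟩
    · exact ⟨s, hπps⟩
  have hidx : (π.comp p).ker.index = 2 := by
    rw [Subgroup.index_ker, MonoidHom.range_eq_top_of_surjective _ hsurj, Subgroup.card_top,
      Nat.card_eq_fintype_card]
    rfl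
  -- injectivity of `f`
  have hpt' : p t = DihedralGroup.r 1 := by
    rw [ht, hs, hu, map_mul, hp, hp, if_neg ht₁, if_neg ht₂]
    simp [DihedralGroup.sr_mul_sr]
  have hrz : ∀ m : ℤ, (DihedralGroup.r (1 : ZMod 0)) ^ m = DihedralGroup.r (m : ZMod 0) := by
    intro m
    exact DihedralGroup.r_one_zpow m
  have hcast_inj : Function.Injective (Int.cast : ℤ → ZMod 0) := by
    intro a b h
    rwa [ZMod.intCast_eq_intCast_iff, Int.ModEq, Nat.cast_zero, Int.emod_zero,
      Int.emod_zero] at h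
  have hinj : Function.Injective f := by
    rw [injective_iff_map_eq_one]
    intro g hg
    have h1 : p (f g) = 1 := by rw [hg, map_one]
    rw [hf_apply, map_mul, hp_base, one_mul, map_zpow, map_inv, hpt', inv_zpow', hrz] at h1
    have h2 : -(Multiplicative.toAdd g.right) = (0 : ℤ) := by
      apply hcast_inj
      rw [DihedralGroup.one_def] at h1
      exact DihedralGroup.r.inj h1
    have hright : g.right = 1 := by
      have : Multiplicative.toAdd g.right = 0 := by omega
      simpa using congrArg Multiplicative.ofAdd this
    have hleft : g.left = 1 := by
      apply PushoutI.base_injective hφ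
      have := hf_apply g
      rw [hg, hright] at this
      simpa using this.symm
    rw [← SemidirectProduct.inl_left_mul_inr_right g, hleft, hright]
    simp
  -- assemble
  refine ⟨hker.trans hMclosure, hidx, α, hα, ⟨?_⟩⟩
  exact (MulEquiv.subgroupCongr (hker.trans (congrArg _ rfl))).trans
    ((MonoidHom.ofInjective hinj).symm)
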